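/- arXiv:2501.08842 — 5 statements merged into one kernel-verified Lean document; each statement's English description precedes it below -/
import Mathlib

section
/- Let x₀, y₁, x₂, y₂, p_{x₀}, p_{y₁}, p_{x₂}, p_{y₂} : ℝ → ℝ be differentiable functions satisfying the Hamiltonian system of the sphere: x₀' = 6p_{y₁}; y₁' = 6p_{x₀} − 2(x₂²+y₂²)p_{y₁} + 2y₂p_{x₂} − 2x₂p_{y₂}; x₂' = 2y₂p_{y₁} − 2p_{x₂}; y₂' = −2x₂p_{y₁} − 2p_{y₂}; p_{x₀}' = 0; p_{y₁}' = 0; p_{x₂}' = 2x₂p_{y₁}² + 2p_{y₁}p_{y₂}; p_{y₂}' = 2y₂p_{y₁}² − 2p_{y₁}p_{x₂}, and set c := 4·p_{y₁}(0). If c ≠ 0, then there exist constants c₁, c₂ ∈ ℂ and real constants c̃₁, c̃₂, c̃₃, c̃₄ such that for all t ∈ ℝ: x₂(t) + i y₂(t) = c₁ e^{−ict} + c₂ and y₁(t) = c̃₁ t + c̃₂ cos(ct) + c̃₃ sin(ct) + c̃₄. -/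
open Complex Real

/-- The chains of the sphere: any global solution of the Hamiltonian
system of the sphere with `c := 4 p_{y₁}(0) ≠ 0` satisfies
`z₂(t) = c₁ e^{−ict} + c₂` and `y₁(t) = c̃₁ t + c̃₂ cos(ct) + c̃₃ sin(ct) + c̃₄`. -/
theorem sphere_chains_explicit
    (x0 y1 x2 y2 p0 p1 p2 p3 : ℝ → ℝ)
    (hx0 : ∀ t, HasDerivAt x0 (6 * p1 t) t)
    (hy1 : ∀ t, HasDerivAt y1
      (6 * p0 t - 2 * (x2 t ^ 2 + y2 t ^ 2) * p1 t + 2 * y2 t * p2 t - 2 * x2 t * p3 t) t)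
    (hx2 : ∀ t, HasDerivAt x2 (2 * y2 t * p1 t - 2 * p2 t) t)
    (hy2 : ∀ t, HasDerivAt y2 (-2 * x2 t * p1 t - 2 * p3 t) t)
    (hp0 : ∀ t, HasDerivAt p0 0 t)
    (hp1 : ∀ t, HasDerivAt p1 0 t)
    (hp2 : ∀ t, HasDerivAt p2 (2 * x2 t * p1 t ^ 2 + 2 * p1 t * p3 t) t)
    (hp3 : ∀ t, HasDerivAt p3 (2 * y2 t * p1 t ^ 2 - 2 * p1 t * p2 t) t)
    (c : ℝ) (hc : c = 4 * p1 0) (hc0 : c ≠ 0) :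
    ∃ c1 c2 : ℂ, ∃ d1 d2 d3 d4 : ℝ, ∀ t : ℝ,
      (x2 t : ℂ) + (y2 t : ℂ) * Complex.I
          = c1 * Complex.exp (-Complex.I * (c : ℂ) * (t : ℂ)) + c2 ∧
      y1 t = d1 * t + d2 * Real.cos (c * t) + d3 * Real.sin (c * t) + d4 := by
  set a : ℝ := p1 0 with ha
  have hp1c : ∀ t, p1 t = a := fun t =>
    is_const_of_deriv_eq_zero (fun s => (hp1 s).differentiableAt) (fun s => (hp1 s).deriv) t 0
  have hp0c : ∀ t, p0 t = p0 0 := fun t =>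
    is_const_of_deriv_eq_zero (fun s => (hp0 s).differentiableAt) (fun s => (hp0 s).deriv) t 0
  set Z : ℝ → ℂ := fun t => (x2 t : ℂ) + (y2 t : ℂ) * Complex.I with hZ
  set W : ℝ → ℂ := fun t => (p2 t : ℂ) + (p3 t : ℂ) * Complex.I with hW
  set V : ℝ → ℂ := fun t => -2 * Complex.I * (a : ℂ) * Z t - 2 * W t with hV
  have hZd : ∀ t, HasDerivAt Z (V t) t := by
    intro t
    have h := ((hx2 t).ofReal_comp).add (((hy2 t).ofReal_comp).mul_const Complex.I)
    refine h.congr_deriv ?_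
    rw [hp1c t]
    apply Complex.ext <;> simp [hV, hW, hZ] <;> ring
  have hWd : ∀ t, HasDerivAt W
      (((2 * x2 t * a ^ 2 + 2 * a * p3 t : ℝ) : ℂ)
        + ((2 * y2 t * a ^ 2 - 2 * a * p2 t : ℝ) : ℂ) * Complex.I) t := by
    intro t
    have h2 := hp2 t; have h3 := hp3 t
    rw [hp1c t] at h2 h3
    exact (h2.ofReal_comp).add ((h3.ofReal_comp).mul_const Complex.I)
  have hVd : ∀ t, HasDerivAt V (-Complex.I * (c : ℂ) * V t) t := by
    intro t
    have h := (((hZd t).const_mul (-2 * Complex.I * (a : ℂ))).sub ((hWd t).const_mul 2))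
    refine h.congr_deriv ?_
    rw [hc]
    apply Complex.ext <;> simp [hV, hW, hZ, pow_two] <;> ring
  -- E t := exp (-I c t)
  have hEd : ∀ t : ℝ, HasDerivAt (fun s : ℝ => Complex.exp (-Complex.I * (c : ℂ) * (s : ℂ)))
      (Complex.exp (-Complex.I * (c : ℂ) * (t : ℂ)) * (-Complex.I * (c : ℂ))) t := by
    intro t
    have h : HasDerivAt (fun s : ℝ => -Complex.I * (c : ℂ) * (s : ℂ)) (-Complex.I * (c : ℂ)) t := by
      simpa using ((hasDerivAt_id t).ofReal_comp).const_mul (-Complex.I * (c : ℂ))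
    exact h.cexp
  have hEd' : ∀ t : ℝ, HasDerivAt (fun s : ℝ => Complex.exp (Complex.I * (c : ℂ) * (s : ℂ)))
      (Complex.exp (Complex.I * (c : ℂ) * (t : ℂ)) * (Complex.I * (c : ℂ))) t := by
    intro t
    have h : HasDerivAt (fun s : ℝ => Complex.I * (c : ℂ) * (s : ℂ)) (Complex.I * (c : ℂ)) t := by
      simpa using ((hasDerivAt_id t).ofReal_comp).const_mul (Complex.I * (c : ℂ))
    exact h.cexp
  -- g t := V t * exp (I c t) is constant
  have hVt : ∀ t : ℝ, V t = V 0 * Complex.exp (-Complex.I * (c : ℂ) * (t : ℂ)) := by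
    have hg : ∀ t : ℝ, HasDerivAt (fun s : ℝ => V s * Complex.exp (Complex.I * (c : ℂ) * (s : ℂ))) 0 t := by
      intro t
      have h := (hVd t).mul (hEd' t)
      refine h.congr_deriv ?_
      ring
    intro t
    have hconst : V t * Complex.exp (Complex.I * (c : ℂ) * (t : ℂ)) = V 0 * Complex.exp (Complex.I * (c : ℂ) * (0 : ℝ)) :=
      is_const_of_deriv_eq_zero (fun s => (hg s).differentiableAt) (fun s => (hg s).deriv) t 0
    have hinv : Complex.exp (Complex.I * (c : ℂ) * (t : ℂ)) * Complex.exp (-Complex.I * (c : ℂ) * (t : ℂ)) = 1 := by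
      rw [← Complex.exp_add]; ring_nf; exact Complex.exp_zero
    calc V t = V t * (Complex.exp (Complex.I * (c : ℂ) * (t : ℂ)) * Complex.exp (-Complex.I * (c : ℂ) * (t : ℂ))) := by
          rw [hinv, mul_one]
      _ = (V t * Complex.exp (Complex.I * (c : ℂ) * (t : ℂ))) * Complex.exp (-Complex.I * (c : ℂ) * (t : ℂ)) := by ring
      _ = V 0 * Complex.exp (-Complex.I * (c : ℂ) * (t : ℂ)) := by
          rw [hconst]; push_cast; simp
  have hic : (-Complex.I * (c : ℂ)) ≠ 0 := by
    simp [Complex.ext_iff, hc0]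
  obtain ⟨c1, hc1⟩ : ∃ v : ℂ, v = V 0 / (-Complex.I * (c : ℂ)) := ⟨_, rfl⟩
  have hic' : (Complex.I * (c : ℂ)) ≠ 0 := fun h => hic (by rw [neg_mul, h, neg_zero])
  have hV0 : V 0 = -Complex.I * (c : ℂ) * c1 := by
    rw [hc1]; field_simp
    rw [mul_div_assoc, div_self (Complex.ofReal_ne_zero.mpr hc0), mul_one]
  obtain ⟨c2, hc2def⟩ : ∃ v : ℂ, v = Z 0 - c1 := ⟨_, rfl⟩
  have hZt : ∀ t : ℝ, Z t = c1 * Complex.exp (-Complex.I * (c : ℂ) * (t : ℂ)) + c2 := by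
    have hF : ∀ t : ℝ, HasDerivAt (fun s : ℝ => Z s - c1 * Complex.exp (-Complex.I * (c : ℂ) * (s : ℂ))) 0 t := by
      intro t
      have h := (hZd t).sub ((hEd t).const_mul c1)
      refine h.congr_deriv ?_
      rw [hVt t, hV0]; ring
    intro t
    have hconst : Z t - c1 * Complex.exp (-Complex.I * (c : ℂ) * (t : ℂ))
        = Z 0 - c1 * Complex.exp (-Complex.I * (c : ℂ) * (0 : ℝ)) :=
      is_const_of_deriv_eq_zero (fun s => (hF s).differentiableAt) (fun s => (hF s).deriv) t 0
    have h0 : Z 0 - c1 * Complex.exp (-Complex.I * (c : ℂ) * (0 : ℝ)) = c2 := by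
      rw [hc2def]; push_cast; simp
    rw [h0] at hconst
    linear_combination hconst
  -- the constant u = c1 * conj c2
  have hconjE : ∀ t : ℝ, (starRingEnd ℂ) (Complex.exp (-Complex.I * (c : ℂ) * (t : ℂ)))
      = Complex.exp (Complex.I * (c : ℂ) * (t : ℂ)) := by
    intro t
    rw [← Complex.exp_conj]
    congr 1
    simp
  obtain ⟨u, hu⟩ : ∃ v : ℂ, v = c1 * (starRingEnd ℂ) c2 := ⟨_, rfl⟩
  have hB : ∀ t : ℝ, (starRingEnd ℂ) (Z t) * V t
      = -Complex.I * (c : ℂ) * ((Complex.normSq c1 : ℝ) : ℂ)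
        - Complex.I * (c : ℂ) * u
            * Complex.exp (-Complex.I * (c : ℂ) * (t : ℂ)) := by
    intro t
    have hinv : Complex.exp (Complex.I * (c : ℂ) * (t : ℂ))
        * Complex.exp (-Complex.I * (c : ℂ) * (t : ℂ)) = 1 := by
      rw [← Complex.exp_add]; ring_nf; exact Complex.exp_zero
    have hm := Complex.mul_conj c1
    rw [hu, hZt t, hVt t, hV0, map_add, map_mul, hconjE t]
    linear_combination (-Complex.I * (c : ℂ) * ((Complex.normSq c1 : ℝ) : ℂ)) * hinv
      + (-Complex.I * (c : ℂ) * Complex.exp (Complex.I * (c : ℂ) * (t : ℂ))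
          * Complex.exp (-Complex.I * (c : ℂ) * (t : ℂ))) * hm
  have hE : ∀ t : ℝ, Complex.exp (-Complex.I * (c : ℂ) * (t : ℂ))
      = ((Real.cos (c * t) : ℝ) : ℂ) - ((Real.sin (c * t) : ℝ) : ℂ) * Complex.I := by
    intro t
    have h1 : -Complex.I * (c : ℂ) * (t : ℂ) = ((-(c * t) : ℝ) : ℂ) * Complex.I := by
      push_cast; ring
    rw [h1, Complex.exp_mul_I, ← Complex.ofReal_cos, ← Complex.ofReal_sin,
      Real.cos_neg, Real.sin_neg]
    push_cast
    ring
  have him : ∀ t : ℝ, ((starRingEnd ℂ) (Z t) * V t).im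
      = -c * Complex.normSq c1 - c * (u.re * Real.cos (c * t) + u.im * Real.sin (c * t)) := by
    intro t
    obtain ⟨co, hco⟩ : ∃ v : ℝ, v = Real.cos (c * t) := ⟨_, rfl⟩
    obtain ⟨si, hsi⟩ : ∃ v : ℝ, v = Real.sin (c * t) := ⟨_, rfl⟩
    rw [hB t, hE t, ← hco, ← hsi]
    simp [Complex.mul_im, Complex.mul_re]
    ring
  have hA : ∀ t : ℝ, 6 * p0 t - 2 * (x2 t ^ 2 + y2 t ^ 2) * p1 t + 2 * y2 t * p2 t
      - 2 * x2 t * p3 t = 6 * p0 0 + ((starRingEnd ℂ) (Z t) * V t).im := by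
    intro t
    rw [hp0c t, hp1c t]
    simp [hZ, hV, hW, Complex.mul_im, Complex.mul_re]
    ring
  obtain ⟨d1, hd1⟩ : ∃ v : ℝ, v = 6 * p0 0 - c * Complex.normSq c1 := ⟨_, rfl⟩
  obtain ⟨d2, hd2⟩ : ∃ v : ℝ, v = u.im := ⟨_, rfl⟩
  obtain ⟨d3, hd3⟩ : ∃ v : ℝ, v = -u.re := ⟨_, rfl⟩
  obtain ⟨d4, hd4⟩ : ∃ v : ℝ, v = y1 0 - d2 := ⟨_, rfl⟩
  refine ⟨c1, c2, d1, d2, d3, d4, fun t => ⟨by simpa [hZ] using hZt t, ?_⟩⟩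
  have hG : ∀ s : ℝ, HasDerivAt
      (fun s : ℝ => y1 s - (d1 * s + d2 * Real.cos (c * s) + d3 * Real.sin (c * s))) 0 s := by
    intro s
    have h1 : HasDerivAt (fun r : ℝ => c * r) c s := by
      simpa using (hasDerivAt_id s).const_mul c
    have htd : HasDerivAt (fun r : ℝ => d1 * r + d2 * Real.cos (c * r) + d3 * Real.sin (c * r))
        (d1 + d2 * (-Real.sin (c * s) * c) + d3 * (Real.cos (c * s) * c)) s := by
      have h0 : HasDerivAt (fun r : ℝ => d1 * r) d1 s := by
        simpa using (hasDerivAt_id s).const_mul d1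
      exact (h0.add ((h1.cos).const_mul d2)).add ((h1.sin).const_mul d3)
    have h := (hy1 s).sub htd
    refine h.congr_deriv ?_
    rw [hA s, him s, hd1, hd2, hd3]
    ring
  have hGc : y1 t - (d1 * t + d2 * Real.cos (c * t) + d3 * Real.sin (c * t))
      = y1 0 - (d1 * 0 + d2 * Real.cos (c * 0) + d3 * Real.sin (c * 0)) :=
    is_const_of_deriv_eq_zero (fun s => (hG s).differentiableAt) (fun s => (hG s).deriv) t 0
  simp only [mul_zero, Real.cos_zero, Real.sin_zero, mul_one, add_zero] at hGc
  rw [hd4]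
  linarith
end

section
/- Let λ ∈ ℂ∖{0}, a ∈ ℂ and t ∈ ℝ, and define D(z₁,z₂) = 1 + 2·conj(a)·z₂ + (|a|² + it)·z₁, g(z₁,z₂) = |λ|²·z₁ / D(z₁,z₂) and f(z₁,z₂) = λ·(z₂ + a·z₁) / D(z₁,z₂). Then for every (z₁,z₂) ∈ ℂ² with Re z₁ = |z₂|² and D(z₁,z₂) ≠ 0, one has Re g(z₁,z₂) = |f(z₁,z₂)|². In particular the map H = (g, f) maps the Heisenberg hypersurface ℍ² into itself wherever it is defined, and H(0,0) = (0,0). -/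
open Complex ComplexConjugate

/-- The denominator of the automorphisms of the Heisenberg hypersurface. -/
noncomputable def heisDenom (a : ℂ) (t : ℝ) (z1 z2 : ℂ) : ℂ :=
  1 + 2 * conj a * z2 + (((‖a‖ ^ 2 : ℝ) : ℂ) + Complex.I * (t : ℂ)) * z1

/-- First component `g` of the automorphism `H = (g, f)`. -/
noncomputable def heisG (lam a : ℂ) (t : ℝ) (z1 z2 : ℂ) : ℂ :=
  ((‖lam‖ ^ 2 : ℝ) : ℂ) * z1 / heisDenom a t z1 z2

/-- Second component `f` of the automorphism `H = (g, f)`. -/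
noncomputable def heisF (lam a : ℂ) (t : ℝ) (z1 z2 : ℂ) : ℂ :=
  lam * (z2 + a * z1) / heisDenom a t z1 z2

/-- The maps `H = (g, f)` preserve the Heisenberg hypersurface
`Re z₁ = |z₂|²` wherever they are defined, and fix the origin. -/
theorem heisenberg_automorphism (lam : ℂ) (hlam : lam ≠ 0) (a : ℂ) (t : ℝ) :
    (∀ z1 z2 : ℂ, z1.re = ‖z2‖ ^ 2 → heisDenom a t z1 z2 ≠ 0 →
      (heisG lam a t z1 z2).re = ‖heisF lam a t z1 z2‖ ^ 2) ∧
    heisG lam a t 0 0 = 0 ∧ heisF lam a t 0 0 = 0 := by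
  refine ⟨?_, by simp [heisG], by simp [heisF]⟩
  intro z1 z2 hz hD
  set D := heisDenom a t z1 z2 with hDdef
  have hns : Complex.normSq D ≠ 0 := by simpa [Complex.normSq_eq_zero] using hD
  have hre : z1.re = Complex.normSq z2 := hz.trans (Complex.sq_norm z2)
  have key : z1.re * D.re + z1.im * D.im = Complex.normSq (z2 + a * z1) := by
    simp only [hDdef, heisDenom, Complex.normSq_apply, Complex.add_re, Complex.add_im,
      Complex.mul_re, Complex.mul_im, Complex.one_re, Complex.one_im,
      Complex.conj_re, Complex.conj_im, Complex.ofReal_re, Complex.ofReal_im,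
      Complex.I_re, Complex.I_im, Complex.sq_norm, Complex.re_ofNat, Complex.im_ofNat]
    rw [hre, Complex.normSq_apply z2]
    ring
  rw [Complex.sq_norm (heisF lam a t z1 z2), heisG, heisF, Complex.normSq_div, Complex.div_re,
    ← hDdef, Complex.normSq_mul]
  rw [← add_div, div_eq_div_iff hns hns]
  simp only [Complex.mul_re, Complex.mul_im, Complex.ofReal_re, Complex.ofReal_im,
    Complex.sq_norm]
  linear_combination Complex.normSq lam * Complex.normSq D * key
end

section
/- Let φ : b𝔻 → ℂ be a continuous function on the unit circle. Then φ admits an extension F : closure(𝔻) → ℂ which is continuous on closure(𝔻) and holomorphic on the open unit disc 𝔻 with F = φ on b𝔻, if and only if the moment conditions hold: ∫₀^{2π} φ(e^{iθ}) e^{i(m+1)θ} dθ = 0 for every integer m ≥ 0 (equivalently, the contour integral of ζ^m φ(ζ) dζ over b𝔻 vanishes for all m ≥ 0). -/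
open Complex Metric

open MeasureTheory intervalIntegral Set

noncomputable def Complex.abs : AbsoluteValue ℂ ℝ where
  toFun := fun z => ‖z‖
  map_mul' := norm_mul
  nonneg' := norm_nonneg
  eq_zero' _ := norm_eq_zero
  add_le' := norm_add_le

lemma Complex.norm_eq_abs (z : ℂ) : ‖z‖ = Complex.abs z := rfl

lemma Complex.abs_exp (z : ℂ) : Complex.abs (Complex.exp z) = Real.exp z.re := Complex.norm_exp z

lemma Complex.abs_conj (z : ℂ) : Complex.abs ((starRingEnd ℂ) z) = Complex.abs z := Complex.norm_conj z

lemma Complex.sq_abs (z : ℂ) : Complex.abs z ^ 2 = Complex.normSq z := Complex.sq_norm z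

lemma Complex.normSq_eq_abs (z : ℂ) : Complex.normSq z = Complex.abs z ^ 2 := (Complex.sq_norm z).symm

lemma Complex.abs_ofReal (r : ℝ) : Complex.abs (r : ℂ) = |r| := Complex.norm_real r

lemma Complex.abs_two : Complex.abs 2 = 2 := by
  rw [← Complex.norm_eq_abs]; simp

lemma aux_abs_exp (t : ℝ) : Complex.abs (Complex.exp (Complex.I * t)) = 1 := by
  simp [Complex.abs_exp]

lemma aux_kernel_id {z : ℂ} (hz : Complex.abs z < 1) (t : ℝ) :
    Complex.exp (Complex.I * t) / (Complex.exp (Complex.I * t) - z)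
      + (starRingEnd ℂ) z * Complex.exp (Complex.I * t) /
          (1 - (starRingEnd ℂ) z * Complex.exp (Complex.I * t))
    = (((1 - Complex.normSq z) / Complex.normSq (Complex.exp (Complex.I * t) - z) : ℝ) : ℂ) := by
  set u := Complex.exp (Complex.I * t) with hu
  have habs : Complex.abs u = 1 := aux_abs_exp t
  have hrel : u * (starRingEnd ℂ) u = 1 := by
    rw [Complex.mul_conj]
    rw [Complex.normSq_eq_abs, habs]
    norm_num
  have h1 : u - z ≠ 0 := by
    intro h
    rw [sub_eq_zero] at h
    rw [← h, habs] at hz; exact lt_irrefl 1 hz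
  have h2 : 1 - (starRingEnd ℂ) z * u ≠ 0 := by
    intro h
    rw [sub_eq_zero] at h
    have : Complex.abs ((starRingEnd ℂ) z * u) = Complex.abs z := by
      rw [map_mul, habs, Complex.abs_conj, mul_one]
    rw [← h] at this
    simp only [map_one] at this
    rw [this] at hz; exact lt_irrefl _ hz
  have h3 : (starRingEnd ℂ) u - (starRingEnd ℂ) z ≠ 0 := by
    rw [← map_sub]
    intro h
    apply h1
    have := congrArg (starRingEnd ℂ) h
    simpa using this
  rw [Complex.ofReal_div, Complex.ofReal_sub, Complex.ofReal_one, ← Complex.mul_conj,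
    ← Complex.mul_conj, map_sub]
  rw [div_add_div _ _ h1 h2, div_eq_div_iff (mul_ne_zero h1 h2) (mul_ne_zero h1 h3)]
  linear_combination (1 - z * (starRingEnd ℂ) z) * (u - z) * hrel

lemma aux_exp_int (m : ℕ) :
    (∫ θ in (0:ℝ)..(2*Real.pi), Complex.exp (Complex.I * ((m:ℂ)+1) * θ)) = 0 := by
  have hc : Complex.I * ((m:ℂ)+1) ≠ 0 := by
    apply mul_ne_zero Complex.I_ne_zero
    exact Nat.cast_add_one_ne_zero m
  rw [integral_exp_mul_complex hc]
  have h1 : Complex.I * ((m:ℂ)+1) * (2*Real.pi : ℝ) = ((m:ℤ)+1 : ℤ) * (2 * Real.pi * Complex.I) := by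
    push_cast; ring
  rw [h1, Complex.exp_int_mul_two_pi_mul_I]
  simp

lemma aux_const_moment (k : ℂ) (m : ℕ) :
    (∫ θ in (0:ℝ)..(2*Real.pi),
      k * Complex.exp (Complex.I * ((m:ℂ)+1) * θ)) = 0 := by
  rw [intervalIntegral.integral_const_mul, aux_exp_int, mul_zero]


lemma aux_abs_exp_m (m : ℕ) (t : ℝ) :
    Complex.abs (Complex.exp (Complex.I * ((m:ℂ)+1) * t)) = 1 := by
  rw [show Complex.I*((m:ℂ)+1)*(t:ℂ) = Complex.I * ((((m+1:ℕ):ℝ)*t : ℝ) : ℂ) by push_cast; ring,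
    aux_abs_exp]

lemma aux_cont_phi (φ : ℂ → ℂ) (hφ : ContinuousOn φ (Metric.sphere (0 : ℂ) 1)) :
    Continuous fun t : ℝ => φ (Complex.exp (Complex.I * t)) := by
  apply hφ.comp_continuous
  · exact Complex.continuous_exp.comp (continuous_const.mul Complex.continuous_ofReal)
  · intro t
    simp [mem_sphere_zero_iff_norm, Complex.norm_eq_abs, aux_abs_exp]

lemma aux_moment_int (φ : ℂ → ℂ) (hφ : ContinuousOn φ (Metric.sphere (0 : ℂ) 1))
    (hm : ∀ m : ℕ, (∫ θ in (0 : ℝ)..(2 * Real.pi),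
        φ (Complex.exp (Complex.I * (θ : ℂ))) *
          Complex.exp (Complex.I * ((m : ℂ) + 1) * (θ : ℂ))) = 0)
    {z : ℂ} (hz : Complex.abs z < 1) :
    (∫ t in (0:ℝ)..(2*Real.pi), φ (Complex.exp (Complex.I * t)) *
        ((starRingEnd ℂ) z * Complex.exp (Complex.I * t) /
          (1 - (starRingEnd ℂ) z * Complex.exp (Complex.I * t)))) = 0 := by
  set c := (starRingEnd ℂ) z with hcdef
  have hc : Complex.abs c < 1 := by rwa [hcdef, Complex.abs_conj]
  obtain ⟨C, hC⟩ := (isCompact_sphere (0:ℂ) 1).exists_bound_of_continuousOn hφ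
  have hCt : ∀ t : ℝ, ‖φ (Complex.exp (Complex.I * t))‖ ≤ C := by
    intro t
    apply hC
    simp [mem_sphere_zero_iff_norm, Complex.norm_eq_abs, aux_abs_exp]
  have h2pi : (0:ℝ) ≤ 2*Real.pi := by positivity
  set F : ℕ → ℝ → ℂ := fun m t => φ (Complex.exp (Complex.I * t)) *
      (c^(m+1) * Complex.exp (Complex.I * ((m:ℂ)+1) * t)) with hF
  have hFnorm : ∀ m t, ‖F m t‖ = ‖φ (Complex.exp (Complex.I * t))‖ * Complex.abs c ^ (m+1) := by
    intro m t
    rw [hF]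
    simp only [norm_mul, Complex.norm_eq_abs, map_mul, map_pow]
    rw [aux_abs_exp_m, mul_one]
  have hFsum : ∀ t : ℝ, HasSum (fun m => F m t)
      (φ (Complex.exp (Complex.I * t)) * (c * Complex.exp (Complex.I * t) /
        (1 - c * Complex.exp (Complex.I * t)))) := by
    intro t
    have hlt : ‖c * Complex.exp (Complex.I * t)‖ < 1 := by
      rw [Complex.norm_eq_abs, map_mul, aux_abs_exp, mul_one]; exact hc
    have hgeo := hasSum_geometric_of_norm_lt_one hlt
    have h2 := hgeo.mul_left (φ (Complex.exp (Complex.I * t)) * (c * Complex.exp (Complex.I * t)))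
    have heq : (fun m : ℕ => φ (Complex.exp (Complex.I * t)) * (c * Complex.exp (Complex.I * t)) *
        (c * Complex.exp (Complex.I * t)) ^ m) = fun m => F m t := by
      funext m
      rw [hF]
      simp only
      rw [mul_pow, ← Complex.exp_nat_mul,
        show Complex.I * ((m:ℂ)+1) * t = Complex.I*t + (m:ℂ)*(Complex.I*t) by push_cast; ring,
        Complex.exp_add]
      ring
    rw [show φ (Complex.exp (Complex.I * t)) * (c * Complex.exp (Complex.I * t) /
        (1 - c * Complex.exp (Complex.I * t))) = φ (Complex.exp (Complex.I * t)) *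
        (c * Complex.exp (Complex.I * t)) * (1 - c * Complex.exp (Complex.I * t))⁻¹ from by ring,
      ← heq]
    exact h2
  have hFcont : ∀ m : ℕ, Continuous (F m) := by
    intro m
    exact (aux_cont_phi φ hφ).mul (continuous_const.mul
      (Complex.continuous_exp.comp ((continuous_const.mul Complex.continuous_ofReal))))
  rw [intervalIntegral.integral_of_le h2pi]
  have hμ : (volume.restrict (Set.Ioc (0:ℝ) (2*Real.pi))) Set.univ
      = ENNReal.ofReal (2*Real.pi) := by
    simp [Real.volume_Ioc]
  have hint : ∀ m : ℕ, Integrable (F m) (volume.restrict (Set.Ioc (0:ℝ) (2*Real.pi))) := by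
    intro m
    exact (hFcont m).integrableOn_Ioc
  have hsum : Summable fun m => ∫ t, ‖F m t‖ ∂(volume.restrict (Set.Ioc (0:ℝ) (2*Real.pi))) := by
    refine Summable.of_nonneg_of_le (fun m => integral_nonneg (fun t => norm_nonneg _))
      (fun m => ?_) (f := fun m => (C * Complex.abs c ^ (m+1)) * (2*Real.pi)) ?_
    · calc ∫ t, ‖F m t‖ ∂(volume.restrict (Set.Ioc (0:ℝ) (2*Real.pi)))
          ≤ ∫ _t, C * Complex.abs c ^ (m+1) ∂(volume.restrict (Set.Ioc (0:ℝ) (2*Real.pi))) := by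
            apply integral_mono (hint m).norm (integrable_const _)
            intro t
            show ‖F m t‖ ≤ C * Complex.abs c ^ (m + 1)
            rw [hFnorm m t]
            exact mul_le_mul_of_nonneg_right (hCt t) (by positivity)
        _ = (C * Complex.abs c ^ (m+1)) * (2*Real.pi) := by
            rw [MeasureTheory.integral_const, measureReal_def, hμ, smul_eq_mul, ENNReal.toReal_ofReal h2pi,
              mul_comm]
    · apply Summable.mul_right
      apply Summable.mul_left
      exact (summable_geometric_of_lt_one (by positivity) hc).comp_injective
        (add_left_injective 1)
  calc (∫ t in Set.Ioc (0:ℝ) (2*Real.pi), φ (Complex.exp (Complex.I * t)) *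
        (c * Complex.exp (Complex.I * t) / (1 - c * Complex.exp (Complex.I * t))))
      = ∫ t in Set.Ioc (0:ℝ) (2*Real.pi), ∑' m, F m t := by
        apply MeasureTheory.integral_congr_ae
        filter_upwards with t
        exact ((hFsum t).tsum_eq).symm
    _ = ∑' m, ∫ t in Set.Ioc (0:ℝ) (2*Real.pi), F m t :=
        (integral_tsum_of_summable_integral_norm hint hsum).symm
    _ = 0 := by
        have hzero : ∀ m : ℕ, (∫ t in Set.Ioc (0:ℝ) (2*Real.pi), F m t) = 0 := by
          intro m
          have hmm := hm m
          rw [intervalIntegral.integral_of_le h2pi] at hmm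
          calc (∫ t in Set.Ioc (0:ℝ) (2*Real.pi), F m t)
              = ∫ t in Set.Ioc (0:ℝ) (2*Real.pi), c^(m+1) *
                  (φ (Complex.exp (Complex.I * t)) * Complex.exp (Complex.I * ((m:ℂ)+1) * t)) := by
                apply MeasureTheory.integral_congr_ae; filter_upwards with t; rw [hF]; ring
            _ = c^(m+1) * ∫ t in Set.Ioc (0:ℝ) (2*Real.pi),
                  (φ (Complex.exp (Complex.I * t)) * Complex.exp (Complex.I * ((m:ℂ)+1) * t)) :=
                integral_const_mul _ _
            _ = 0 := by rw [hmm, mul_zero]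
        simp [hzero]


lemma aux_exp_ne (z : ℂ) (hz : Complex.abs z < 1) (t : ℝ) :
    Complex.exp (Complex.I * t) - z ≠ 0 := by
  intro h
  rw [sub_eq_zero] at h
  rw [← h, aux_abs_exp] at hz
  exact lt_irrefl _ hz

lemma aux_one_sub_ne (z : ℂ) (hz : Complex.abs z < 1) (t : ℝ) :
    1 - (starRingEnd ℂ) z * Complex.exp (Complex.I * t) ≠ 0 := by
  intro h
  rw [sub_eq_zero] at h
  have h2 : Complex.abs ((starRingEnd ℂ) z * Complex.exp (Complex.I * t)) = Complex.abs z := by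
    rw [map_mul, aux_abs_exp, Complex.abs_conj, mul_one]
  rw [← h] at h2
  simp only [map_one] at h2
  rw [h2] at hz
  exact lt_irrefl _ hz

lemma aux_circle_eq (f : ℂ → ℂ) (z : ℂ) :
    (∮ ζ in C((0:ℂ), 1), (ζ - z)⁻¹ • f ζ)
      = ∫ t in (0:ℝ)..(2*Real.pi), f (Complex.exp (Complex.I * t)) *
          (Complex.I * Complex.exp (Complex.I * t) / (Complex.exp (Complex.I * t) - z)) := by
  simp only [circleIntegral, deriv_circleMap, circleMap, Complex.ofReal_one, one_mul, zero_add,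
    smul_eq_mul]
  apply intervalIntegral.integral_congr
  intro t _
  beta_reduce
  rw [show (t:ℂ) * Complex.I = Complex.I * t from mul_comm _ _]
  ring

/-- Poisson representation of the Cauchy integral, given the moment conditions. -/
lemma aux_rep (φ : ℂ → ℂ) (hφ : ContinuousOn φ (Metric.sphere (0 : ℂ) 1))
    (hm : ∀ m : ℕ, (∫ θ in (0 : ℝ)..(2 * Real.pi),
        φ (Complex.exp (Complex.I * (θ : ℂ))) *
          Complex.exp (Complex.I * ((m : ℂ) + 1) * (θ : ℂ))) = 0)
    {z : ℂ} (hz : Complex.abs z < 1) :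
    (2*Real.pi*Complex.I : ℂ)⁻¹ • (∮ ζ in C((0:ℂ), 1), (ζ - z)⁻¹ • φ ζ)
      = (2*Real.pi : ℂ)⁻¹ * ∫ t in (0:ℝ)..(2*Real.pi), φ (Complex.exp (Complex.I * t)) *
          (((1 - Complex.normSq z) / Complex.normSq (Complex.exp (Complex.I * t) - z) : ℝ) : ℂ) := by
  have hcont := aux_cont_phi φ hφ
  have hce : Continuous fun t : ℝ => Complex.exp (Complex.I * t) :=
    Complex.continuous_exp.comp (continuous_const.mul Complex.continuous_ofReal)
  have hA : IntervalIntegrable (fun t : ℝ => φ (Complex.exp (Complex.I * t)) *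
      (Complex.I * Complex.exp (Complex.I * t) / (Complex.exp (Complex.I * t) - z)))
      volume 0 (2*Real.pi) := by
    apply Continuous.intervalIntegrable
    exact hcont.mul ((continuous_const.mul hce).div (hce.sub continuous_const)
      (fun t => aux_exp_ne z hz t))
  have hB : IntervalIntegrable (fun t : ℝ => φ (Complex.exp (Complex.I * t)) *
      ((starRingEnd ℂ) z * Complex.exp (Complex.I * t) /
        (1 - (starRingEnd ℂ) z * Complex.exp (Complex.I * t)))) volume 0 (2*Real.pi) := by
    apply Continuous.intervalIntegrable
    exact hcont.mul ((continuous_const.mul hce).div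
      (continuous_const.sub (continuous_const.mul hce)) (fun t => aux_one_sub_ne z hz t))
  rw [aux_circle_eq]
  have key : (∫ t in (0:ℝ)..(2*Real.pi), φ (Complex.exp (Complex.I * t)) *
      (((1 - Complex.normSq z) / Complex.normSq (Complex.exp (Complex.I * t) - z) : ℝ) : ℂ))
      = Complex.I⁻¹ * ∫ t in (0:ℝ)..(2*Real.pi), φ (Complex.exp (Complex.I * t)) *
          (Complex.I * Complex.exp (Complex.I * t) / (Complex.exp (Complex.I * t) - z)) := by
    have hz0 := aux_moment_int φ hφ hm hz
    calc (∫ t in (0:ℝ)..(2*Real.pi), φ (Complex.exp (Complex.I * t)) *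
        (((1 - Complex.normSq z) / Complex.normSq (Complex.exp (Complex.I * t) - z) : ℝ) : ℂ))
        = ∫ t in (0:ℝ)..(2*Real.pi),
            (Complex.I⁻¹ * (φ (Complex.exp (Complex.I * t)) *
              (Complex.I * Complex.exp (Complex.I * t) / (Complex.exp (Complex.I * t) - z)))
            + φ (Complex.exp (Complex.I * t)) *
              ((starRingEnd ℂ) z * Complex.exp (Complex.I * t) /
                (1 - (starRingEnd ℂ) z * Complex.exp (Complex.I * t)))) := by
          apply intervalIntegral.integral_congr
          intro t _
          beta_reduce
          rw [← aux_kernel_id hz t]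
          have h1 := aux_exp_ne z hz t
          have h2 := aux_one_sub_ne z hz t
          field_simp
      _ = Complex.I⁻¹ * (∫ t in (0:ℝ)..(2*Real.pi), φ (Complex.exp (Complex.I * t)) *
            (Complex.I * Complex.exp (Complex.I * t) / (Complex.exp (Complex.I * t) - z)))
          + ∫ t in (0:ℝ)..(2*Real.pi), φ (Complex.exp (Complex.I * t)) *
              ((starRingEnd ℂ) z * Complex.exp (Complex.I * t) /
                (1 - (starRingEnd ℂ) z * Complex.exp (Complex.I * t))) := by
          rw [intervalIntegral.integral_add (hA.const_mul _) hB,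
            intervalIntegral.integral_const_mul]
      _ = Complex.I⁻¹ * ∫ t in (0:ℝ)..(2*Real.pi), φ (Complex.exp (Complex.I * t)) *
            (Complex.I * Complex.exp (Complex.I * t) / (Complex.exp (Complex.I * t) - z)) := by
          rw [hz0, add_zero]
  rw [key, smul_eq_mul]
  ring


lemma aux_two_pi_I_ne : (2*Real.pi*Complex.I : ℂ) ≠ 0 := by
  simp [Real.pi_ne_zero, Complex.I_ne_zero, Complex.ofReal_ne_zero]

lemma aux_mem_ball {z : ℂ} (hz : Complex.abs z < 1) : z ∈ Metric.ball (0:ℂ) 1 := by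
  simpa [Metric.mem_ball, Complex.dist_eq, Complex.norm_eq_abs] using hz

lemma aux_poisson_const (k : ℂ) {z : ℂ} (hz : Complex.abs z < 1) :
    (2*Real.pi : ℂ)⁻¹ * (∫ t in (0:ℝ)..(2*Real.pi), k *
      (((1 - Complex.normSq z) / Complex.normSq (Complex.exp (Complex.I * t) - z) : ℝ) : ℂ)) = k := by
  have h := aux_rep (fun _ => k) continuousOn_const (fun m => aux_const_moment k m) hz
  rw [circleIntegral.integral_smul_const, circleIntegral.integral_sub_inv_of_mem_ball
    (aux_mem_ball hz), smul_smul, inv_mul_cancel₀ aux_two_pi_I_ne, one_smul] at h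
  exact h.symm

lemma aux_P_cont {z : ℂ} (hz : Complex.abs z < 1) :
    Continuous fun t : ℝ => (1 - Complex.normSq z) / Complex.normSq (Complex.exp (Complex.I * t) - z) := by
  have hce : Continuous fun t : ℝ => Complex.exp (Complex.I * t) :=
    Complex.continuous_exp.comp (continuous_const.mul Complex.continuous_ofReal)
  apply continuous_const.div (Complex.continuous_normSq.comp (hce.sub continuous_const))
  intro t
  simpa [Complex.normSq_eq_zero] using aux_exp_ne z hz t

lemma aux_P_int {z : ℂ} (hz : Complex.abs z < 1) :
    (∫ t in (0:ℝ)..(2*Real.pi),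
      (1 - Complex.normSq z) / Complex.normSq (Complex.exp (Complex.I * t) - z)) = 2*Real.pi := by
  have h := aux_poisson_const 1 hz
  simp only [one_mul] at h
  rw [intervalIntegral.integral_ofReal] at h
  have hpi : (2*Real.pi : ℂ) ≠ 0 := by
    simp [Real.pi_ne_zero, Complex.ofReal_ne_zero]
  field_simp at h
  exact_mod_cast h


lemma aux_est (φ : ℂ → ℂ) (hφ : ContinuousOn φ (Metric.sphere (0 : ℂ) 1))
    (hm : ∀ m : ℕ, (∫ θ in (0 : ℝ)..(2 * Real.pi),
        φ (Complex.exp (Complex.I * (θ : ℂ))) *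
          Complex.exp (Complex.I * ((m : ℂ) + 1) * (θ : ℂ))) = 0)
    {C : ℝ} (hC : ∀ ζ ∈ Metric.sphere (0:ℂ) 1, ‖φ ζ‖ ≤ C)
    {w : ℂ} (hw : w ∈ Metric.sphere (0:ℂ) 1) {δ ε' : ℝ} (hδ : 0 < δ) (hε' : 0 ≤ ε')
    (hδφ : ∀ ζ ∈ Metric.sphere (0:ℂ) 1, Complex.abs (ζ - w) < δ → ‖φ ζ - φ w‖ ≤ ε')
    {z : ℂ} (hz : Complex.abs z < 1) (hzw : Complex.abs (z - w) ≤ δ/2) :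
    ‖(2*Real.pi*Complex.I : ℂ)⁻¹ • (∮ ζ in C((0:ℂ),1), (ζ - z)⁻¹ • φ ζ) - φ w‖
      ≤ ε' + 16*C*(Complex.abs (z - w))/δ^2 := by
  have hwa : Complex.abs w = 1 := by
    simpa [Complex.dist_eq, Complex.norm_eq_abs] using hw
  have h2pi : (0:ℝ) ≤ 2*Real.pi := by positivity
  have hcont := aux_cont_phi φ hφ
  have hesph : ∀ t : ℝ, Complex.exp (Complex.I * t) ∈ Metric.sphere (0:ℂ) 1 := by
    intro t
    simp [mem_sphere_zero_iff_norm, Complex.norm_eq_abs, aux_abs_exp]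
  have hC0 : 0 ≤ C := le_trans (norm_nonneg _) (hC w hw)
  set P : ℝ → ℝ := fun t => (1 - Complex.normSq z) / Complex.normSq (Complex.exp (Complex.I * t) - z)
    with hPdef
  have hnsq : Complex.normSq z < 1 := by
    rw [← Complex.sq_abs]
    nlinarith [Complex.abs.nonneg z]
  have hP0 : ∀ t, 0 ≤ P t := by
    intro t
    apply div_nonneg (by linarith) (Complex.normSq_nonneg _)
  have hPcont : Continuous P := aux_P_cont hz
  -- the difference formula
  have hdiff : (2*Real.pi*Complex.I : ℂ)⁻¹ • (∮ ζ in C((0:ℂ),1), (ζ - z)⁻¹ • φ ζ) - φ w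
      = (2*Real.pi : ℂ)⁻¹ * ∫ t in (0:ℝ)..(2*Real.pi),
          (φ (Complex.exp (Complex.I * t)) - φ w) * ((P t : ℝ) : ℂ) := by
    rw [aux_rep φ hφ hm hz]
    conv_lhs => rw [← aux_poisson_const (φ w) hz]
    rw [← mul_sub]
    congr 1
    rw [← intervalIntegral.integral_sub]
    · apply intervalIntegral.integral_congr
      intro t _
      beta_reduce
      ring
    · exact (hcont.mul (Complex.continuous_ofReal.comp hPcont)).intervalIntegrable _ _
    · exact (continuous_const.mul (Complex.continuous_ofReal.comp hPcont)).intervalIntegrable _ _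
  rw [hdiff]
  have hnorm2pi : ‖(2*Real.pi : ℂ)⁻¹‖ = (2*Real.pi)⁻¹ := by
    rw [norm_inv]
    simp [Complex.norm_eq_abs, map_mul, Complex.abs_ofReal,
      _root_.abs_of_nonneg Real.pi_pos.le, Complex.abs_two]
  rw [norm_mul, hnorm2pi]
  -- pointwise bound
  set K : ℝ := 8*C*(1 - Complex.normSq z)/δ^2 with hKdef
  have hKnn : 0 ≤ K := by
    rw [hKdef]
    exact div_nonneg (mul_nonneg (by positivity) (by linarith)) (by positivity)
  have hpoint : ∀ t : ℝ, ‖(φ (Complex.exp (Complex.I * t)) - φ w) * ((P t : ℝ) : ℂ)‖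
      ≤ ε' * P t + K := by
    intro t
    rw [norm_mul, Complex.norm_real, Real.norm_eq_abs, _root_.abs_of_nonneg (hP0 t)]
    by_cases h : Complex.abs (Complex.exp (Complex.I * t) - w) < δ
    · have h1 := hδφ _ (hesph t) h
      have := mul_le_mul_of_nonneg_right h1 (hP0 t)
      linarith
    · push_neg at h
      have h1 : ‖φ (Complex.exp (Complex.I * t)) - φ w‖ ≤ 2*C := by
        calc ‖φ (Complex.exp (Complex.I * t)) - φ w‖
            ≤ ‖φ (Complex.exp (Complex.I * t))‖ + ‖φ w‖ := norm_sub_le _ _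
          _ ≤ C + C := add_le_add (hC _ (hesph t)) (hC _ hw)
          _ = 2*C := by ring
      have h2 : δ/2 ≤ Complex.abs (Complex.exp (Complex.I * t) - z) := by
        have htri : Complex.abs (Complex.exp (Complex.I * t) - w)
            ≤ Complex.abs (Complex.exp (Complex.I * t) - z) + Complex.abs (z - w) := by
          calc Complex.abs (Complex.exp (Complex.I * t) - w)
              = Complex.abs ((Complex.exp (Complex.I * t) - z) + (z - w)) := by ring_nf
            _ ≤ _ := Complex.abs.add_le _ _
        linarith
      have h3 : P t ≤ (1 - Complex.normSq z) / ((δ/2)^2) := by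
        apply div_le_div_of_nonneg_left (by linarith) (by positivity)
        rw [← Complex.sq_abs]
        apply pow_le_pow_left₀ (by linarith) h2
      have h4 : ‖φ (Complex.exp (Complex.I * t)) - φ w‖ * P t ≤ 2*C * ((1 - Complex.normSq z) / ((δ/2)^2)) :=
        mul_le_mul h1 h3 (hP0 t) (by linarith)
      have h5 : 2*C * ((1 - Complex.normSq z) / ((δ/2)^2)) = K := by
        rw [hKdef]
        field_simp
        ring
      have h6 : 0 ≤ ε' * P t := mul_nonneg hε' (hP0 t)
      linarith
  -- integrate the bound
  have hflhs : IntervalIntegrable (fun t => ‖(φ (Complex.exp (Complex.I * t)) - φ w) * ((P t : ℝ) : ℂ)‖)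
      volume 0 (2*Real.pi) := by
    apply Continuous.intervalIntegrable
    exact ((hcont.sub continuous_const).mul (Complex.continuous_ofReal.comp hPcont)).norm
  have hgint : IntervalIntegrable (fun t => ε' * P t + K) volume 0 (2*Real.pi) := by
    apply Continuous.intervalIntegrable
    exact (continuous_const.mul hPcont).add continuous_const
  have hintineq : (∫ t in (0:ℝ)..(2*Real.pi), ‖(φ (Complex.exp (Complex.I * t)) - φ w) * ((P t : ℝ) : ℂ)‖)
      ≤ ∫ t in (0:ℝ)..(2*Real.pi), (ε' * P t + K) :=
    intervalIntegral.integral_mono_on h2pi hflhs hgint (fun t _ => hpoint t)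
  have hgval : (∫ t in (0:ℝ)..(2*Real.pi), (ε' * P t + K)) = ε' * (2*Real.pi) + K * (2*Real.pi) := by
    rw [intervalIntegral.integral_add ((hPcont.intervalIntegrable _ _).const_mul ε')
      intervalIntegrable_const, intervalIntegral.integral_const_mul, aux_P_int hz,
      intervalIntegral.integral_const]
    simp [smul_eq_mul]
    ring
  have hnormint : ‖∫ t in (0:ℝ)..(2*Real.pi), (φ (Complex.exp (Complex.I * t)) - φ w) * ((P t : ℝ) : ℂ)‖
      ≤ ε' * (2*Real.pi) + K * (2*Real.pi) := by
    calc ‖∫ t in (0:ℝ)..(2*Real.pi), (φ (Complex.exp (Complex.I * t)) - φ w) * ((P t : ℝ) : ℂ)‖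
        ≤ ∫ t in (0:ℝ)..(2*Real.pi), ‖(φ (Complex.exp (Complex.I * t)) - φ w) * ((P t : ℝ) : ℂ)‖ :=
          intervalIntegral.norm_integral_le_integral_norm h2pi
      _ ≤ _ := le_of_le_of_eq hintineq hgval
  have hpipos : 0 < 2*Real.pi := by positivity
  have hfinal : (2*Real.pi)⁻¹ * ‖∫ t in (0:ℝ)..(2*Real.pi),
      (φ (Complex.exp (Complex.I * t)) - φ w) * ((P t : ℝ) : ℂ)‖ ≤ ε' + K := by
    rw [inv_mul_le_iff₀ hpipos]
    calc ‖∫ t in (0:ℝ)..(2*Real.pi), (φ (Complex.exp (Complex.I * t)) - φ w) * ((P t : ℝ) : ℂ)‖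
        ≤ ε' * (2*Real.pi) + K * (2*Real.pi) := hnormint
      _ = (ε' + K) * (2*Real.pi) := by ring
      _ = 2*Real.pi * (ε' + K) := by ring
  refine le_trans hfinal ?_
  -- convert K to the abs (z - w) bound
  have hsub : 1 - Complex.normSq z ≤ 2 * Complex.abs (z - w) := by
    have h1 : Complex.abs w - Complex.abs z ≤ Complex.abs (w - z) := by
      have := norm_sub_norm_le w z
      simpa [Complex.norm_eq_abs] using this
    rw [Complex.abs.map_sub w z] at h1
    rw [← Complex.sq_abs]
    nlinarith [Complex.abs.nonneg z, sq_nonneg (1 - Complex.abs z)]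
  have hK2 : K ≤ 16*C*(Complex.abs (z - w))/δ^2 := by
    rw [hKdef]
    rw [div_le_div_iff₀ (by positivity) (by positivity)]
    nlinarith [mul_le_mul_of_nonneg_right (mul_le_mul_of_nonneg_left hsub hC0) (sq_nonneg δ)]
  linarith


/-- A continuous function on the unit circle extends continuously to the
closed disc and holomorphically to the open disc if and only if the moment conditions
`∫₀^{2π} φ(e^{iθ}) e^{i(m+1)θ} dθ = 0` hold for all integers `m ≥ 0`. -/
theorem holomorphic_extension_iff_moment_conditions
    (φ : ℂ → ℂ) (hφ : ContinuousOn φ (Metric.sphere (0 : ℂ) 1)) :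
    (∃ F : ℂ → ℂ, ContinuousOn F (Metric.closedBall (0 : ℂ) 1) ∧
        DifferentiableOn ℂ F (Metric.ball (0 : ℂ) 1) ∧
        ∀ ζ ∈ Metric.sphere (0 : ℂ) 1, F ζ = φ ζ) ↔
    (∀ m : ℕ, (∫ θ in (0 : ℝ)..(2 * Real.pi),
        φ (Complex.exp (Complex.I * (θ : ℂ))) *
          Complex.exp (Complex.I * ((m : ℂ) + 1) * (θ : ℂ))) = 0) := by
  have hesph : ∀ t : ℝ, Complex.exp (Complex.I * t) ∈ Metric.sphere (0:ℂ) 1 := by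
    intro t
    simp [mem_sphere_zero_iff_norm, Complex.norm_eq_abs, aux_abs_exp]
  constructor
  · rintro ⟨F, hFc, hFd, hFeq⟩ m
    have hzero : (∮ ζ in C((0:ℂ),1), ζ^m * F ζ) = 0 := by
      apply circleIntegral_eq_zero_of_differentiable_on_off_countable zero_le_one
        Set.countable_empty (((continuous_pow m).continuousOn).mul hFc)
      intro z hz
      exact (differentiable_pow m).differentiableAt.mul
        (hFd.differentiableAt (isOpen_ball.mem_nhds hz.1))
    rw [circleIntegral] at hzero
    simp only [deriv_circleMap, circleMap, Complex.ofReal_one, one_mul, zero_add,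
      smul_eq_mul] at hzero
    have hI : Complex.I * (∫ θ in (0:ℝ)..(2*Real.pi),
        φ (Complex.exp (Complex.I * (θ:ℂ))) *
          Complex.exp (Complex.I * ((m:ℂ)+1) * (θ:ℂ))) = 0 := by
      rw [← intervalIntegral.integral_const_mul, ← hzero]
      apply intervalIntegral.integral_congr
      intro t _
      beta_reduce
      rw [show ((t:ℂ)*Complex.I) = Complex.I*(t:ℂ) from mul_comm _ _]
      rw [hFeq _ (hesph t), ← Complex.exp_nat_mul,
        show Complex.I*((m:ℂ)+1)*(t:ℂ) = Complex.I*(t:ℂ) + (m:ℂ)*(Complex.I*(t:ℂ)) by ring,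
        Complex.exp_add]
      ring
    rcases mul_eq_zero.mp hI with h | h
    · exact absurd h Complex.I_ne_zero
    · exact h
  · intro hm
    set F₀ : ℂ → ℂ :=
      fun z => (2*Real.pi*Complex.I : ℂ)⁻¹ • ∮ ζ in C((0:ℂ),1), (ζ - z)⁻¹ • φ ζ with hF₀
    have hci : CircleIntegrable φ 0 1 :=
      ContinuousOn.circleIntegrable zero_le_one (by simpa using hφ)
    have hps := hasFPowerSeriesOn_cauchy_integral (f := φ) (c := 0) (R := 1) hci one_pos
    have hdiff0 : DifferentiableOn ℂ F₀ (Metric.ball (0:ℂ) 1) := by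
      have h := hps.differentiableOn
      rw [Metric.emetric_ball_nnreal] at h
      simp only [NNReal.coe_one] at h
      exact h
    set F : ℂ → ℂ := fun z => if Complex.abs z < 1 then F₀ z else φ z with hFdef
    have hFball : ∀ z ∈ Metric.ball (0:ℂ) 1, F z = F₀ z := by
      intro z hz
      have : Complex.abs z < 1 := by simpa [Complex.dist_eq, Complex.norm_eq_abs] using hz
      simp [hFdef, this]
    have hFsphere : ∀ ζ ∈ Metric.sphere (0:ℂ) 1, F ζ = φ ζ := by
      intro ζ hζ
      have h1 : Complex.abs ζ = 1 := by simpa [Complex.dist_eq, Complex.norm_eq_abs] using hζ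
      simp [hFdef, h1]
    refine ⟨F, ?_, hdiff0.congr hFball, hFsphere⟩
    intro x hx
    have hx1 : Complex.abs x ≤ 1 := by simpa [Complex.dist_eq, Complex.norm_eq_abs] using hx
    rcases lt_or_eq_of_le hx1 with hlt | heq
    · have hmem := isOpen_ball.mem_nhds (aux_mem_ball hlt)
      have hco : ContinuousAt F₀ x :=
        (hdiff0.differentiableAt hmem).continuousAt
      have hca : ContinuousAt F x := by
        apply hco.congr
        filter_upwards [hmem] with y hy
        exact (hFball y hy).symm
      exact hca.continuousWithinAt
    · have hxs : x ∈ Metric.sphere (0:ℂ) 1 := by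
        simp [mem_sphere_zero_iff_norm, Complex.norm_eq_abs, heq]
      rw [Metric.continuousWithinAt_iff]
      intro ε hε
      have hφx := hφ x hxs
      rw [Metric.continuousWithinAt_iff] at hφx
      obtain ⟨δ₁, hδ₁, hδφ'⟩ := hφx (ε/2) (by linarith)
      obtain ⟨C, hC⟩ := (isCompact_sphere (0:ℂ) 1).exists_bound_of_continuousOn hφ
      have hC0 : 0 ≤ C := le_trans (norm_nonneg _) (hC x hxs)
      refine ⟨min (δ₁/2) ((ε/2) * δ₁^2/(16*C+1)), lt_min (by linarith) (by positivity), ?_⟩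
      intro y hy hyx
      rw [hFsphere x hxs]
      have hy1 : Complex.abs y ≤ 1 := by simpa [Complex.dist_eq, Complex.norm_eq_abs] using hy
      rcases lt_or_eq_of_le hy1 with hylt | hyeq
      · rw [hFball y (aux_mem_ball hylt)]
        have hδφ2 : ∀ ζ ∈ Metric.sphere (0:ℂ) 1, Complex.abs (ζ - x) < δ₁ → ‖φ ζ - φ x‖ ≤ ε/2 := by
          intro ζ hζ hlt2
          have h3 := hδφ' hζ (show dist ζ x < δ₁ by rwa [Complex.dist_eq])
          rw [Complex.dist_eq] at h3
          rw [Complex.norm_eq_abs]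
          exact h3.le
        have hzw : Complex.abs (y - x) ≤ δ₁/2 := by
          have h4 : dist y x < min (δ₁/2) ((ε/2) * δ₁^2/(16*C+1)) := hyx
          rw [Complex.dist_eq] at h4
          exact le_of_lt (lt_of_lt_of_le h4 (min_le_left _ _))
        have hest := aux_est φ hφ hm hC hxs hδ₁ (by linarith) hδφ2 hylt hzw
        rw [Complex.dist_eq]
        rw [Complex.norm_eq_abs] at hest
        have h1 : Complex.abs (y - x) < (ε/2) * δ₁^2/(16*C+1) := by
          have h4 : dist y x < min (δ₁/2) ((ε/2) * δ₁^2/(16*C+1)) := hyx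
          rw [Complex.dist_eq] at h4
          exact lt_of_lt_of_le h4 (min_le_right _ _)
        have h1' : Complex.abs (y - x) * (16*C+1) < ε/2 * δ₁^2 :=
          (lt_div_iff₀ (by positivity)).mp h1
        have h2 : 16*C*(Complex.abs (y - x))/δ₁^2 < ε/2 := by
          rw [div_lt_iff₀ (by positivity)]
          nlinarith [Complex.abs.nonneg (y - x)]
        calc Complex.abs (F₀ y - φ x) ≤ ε/2 + 16*C*(Complex.abs (y - x))/δ₁^2 := hest
          _ < ε := by linarith
      · have hys : y ∈ Metric.sphere (0:ℂ) 1 := by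
          simp [mem_sphere_zero_iff_norm, Complex.norm_eq_abs, hyeq.symm]
        rw [hFsphere y hys]
        have h5 : dist y x < δ₁ := by
          calc dist y x < min (δ₁/2) ((ε/2) * δ₁^2/(16*C+1)) := hyx
            _ ≤ δ₁/2 := min_le_left _ _
            _ ≤ δ₁ := by linarith
        exact lt_trans (hδφ' hys h5) (by linarith)
end

section
/- Let ε, K, C₀ > 0 and for each s ∈ (0, ε] let ẑ(s, ·) : ℝ → ℂ be continuously differentiable in t, and let T_s ∈ [2π − 1/2, 2π + 1/2] be such that: (i) | ∂ẑ/∂t(s,t) − i·e^{it} | ≤ K·s⁴ for all t ∈ [2π − 1/2, 2π + 1/2]; (ii) | ẑ(s, 2π) − ẑ(s, 0) | ≤ C₀·s⁵; (iii) ẑ(s, T_s) = ẑ(s, 0); and (iv) T_s → 2π as s → 0⁺. Then there exist C₁ > 0 and s₀ > 0 such that | T_s − 2π | ≤ C₁·s⁵ for all 0 < s ≤ s₀. -/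
open Complex Real

lemma exp_I_sub_one_lower (θ : ℝ) (hθ : |θ| ≤ 1/2) :
    |θ| / 2 ≤ ‖Complex.exp (Complex.I * θ) - 1‖ := by
  have hπ : |θ| ≤ Real.pi := hθ.trans (by linarith [Real.pi_gt_three])
  have hcos : Real.cos θ ≤ 1 - 2 / Real.pi ^ 2 * θ ^ 2 :=
    Real.cos_le_one_sub_mul_cos_sq hπ
  have habs2 : (‖Complex.exp (Complex.I * θ) - 1‖) ^ 2
      = 2 - 2 * Real.cos θ := by
    rw [mul_comm, Complex.sq_norm]
    simp only [Complex.normSq_apply, Complex.sub_re, Complex.sub_im,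
      Complex.exp_ofReal_mul_I_re, Complex.exp_ofReal_mul_I_im, Complex.one_re, Complex.one_im]
    nlinarith [Real.sin_sq_add_cos_sq θ]
  have hpile : Real.pi ≤ 4 := by linarith [Real.pi_lt_d2]
  have hpi0 : 0 < Real.pi := Real.pi_pos
  have h1 : (|θ| / 2) ^ 2 ≤ (‖Complex.exp (Complex.I * θ) - 1‖) ^ 2 := by
    rw [habs2]
    have h2 : (4 : ℝ) / Real.pi ^ 2 ≥ 1 / 4 := by
      rw [ge_iff_le, div_le_div_iff₀ (by norm_num) (by positivity)]
      nlinarith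
    have h4 : 1 / 4 * θ ^ 2 ≤ 4 / Real.pi ^ 2 * θ ^ 2 :=
      mul_le_mul_of_nonneg_right h2 (sq_nonneg θ)
    have hc2 : 2 / Real.pi ^ 2 * θ ^ 2 ≤ 1 - Real.cos θ := by linarith
    have h5 : 4 / Real.pi ^ 2 * θ ^ 2 ≤ 2 - 2 * Real.cos θ := by
      have := mul_le_mul_of_nonneg_left hc2 (by norm_num : (0:ℝ) ≤ 2)
      calc 4 / Real.pi ^ 2 * θ ^ 2 = 2 * (2 / Real.pi ^ 2 * θ ^ 2) := by ring
        _ ≤ 2 * (1 - Real.cos θ) := this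
        _ = 2 - 2 * Real.cos θ := by ring
    rw [div_pow, _root_.sq_abs]
    norm_num
    linarith
  nlinarith [norm_nonneg (Complex.exp (Complex.I * θ) - 1), abs_nonneg θ]

/-- Quantitative estimate `T_s = 2π + O(s⁵)` for the period of the
rescaled chain. -/
theorem period_estimate
    (ε K C₀ : ℝ) (hε : 0 < ε) (hK : 0 < K) (hC₀ : 0 < C₀)
    (zhat zhat' : ℝ → ℝ → ℂ) (T : ℝ → ℝ)
    (hsmooth : ∀ s ∈ Set.Ioc (0 : ℝ) ε,
      (∀ t : ℝ, HasDerivAt (zhat s) (zhat' s t) t) ∧ Continuous (zhat' s))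
    (hT : ∀ s ∈ Set.Ioc (0 : ℝ) ε,
      T s ∈ Set.Icc (2 * Real.pi - 1 / 2) (2 * Real.pi + 1 / 2))
    (h1 : ∀ s ∈ Set.Ioc (0 : ℝ) ε,
      ∀ t ∈ Set.Icc (2 * Real.pi - 1 / 2) (2 * Real.pi + 1 / 2),
        ‖zhat' s t - Complex.I * Complex.exp (Complex.I * (t : ℂ))‖ ≤ K * s ^ 4)
    (h2 : ∀ s ∈ Set.Ioc (0 : ℝ) ε,
      ‖zhat s (2 * Real.pi) - zhat s 0‖ ≤ C₀ * s ^ 5)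
    (h3 : ∀ s ∈ Set.Ioc (0 : ℝ) ε, zhat s (T s) = zhat s 0)
    (h4 : Filter.Tendsto T (nhdsWithin 0 (Set.Ioi 0)) (nhds (2 * Real.pi))) :
    ∃ C₁ : ℝ, 0 < C₁ ∧ ∃ s₀ : ℝ, 0 < s₀ ∧ s₀ ≤ ε ∧
      ∀ s, 0 < s → s ≤ s₀ → |T s - 2 * Real.pi| ≤ C₁ * s ^ 5 := by
  refine ⟨4 * C₀, by positivity, min ε (min 1 (1 / (4 * K))), ?_, min_le_left _ _, ?_⟩
  · exact lt_min hε (lt_min one_pos (by positivity))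
  intro s hs hs0
  have hsε : s ∈ Set.Ioc 0 ε := ⟨hs, hs0.trans (min_le_left _ _)⟩
  have hs1 : s ≤ 1 := hs0.trans ((min_le_right _ _).trans (min_le_left _ _))
  have hs2 : s ≤ 1 / (4 * K) := hs0.trans ((min_le_right _ _).trans (min_le_right _ _))
  have hKs : K * s ^ 4 ≤ 1 / 4 := by
    have h3' : s ^ 3 ≤ 1 := pow_le_one₀ hs.le hs1
    have h4' : s ^ 4 ≤ s := by nlinarith [pow_nonneg hs.le 3]
    calc K * s ^ 4 ≤ K * s := by nlinarith
      _ ≤ K * (1 / (4 * K)) := by nlinarith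
      _ = 1 / 4 := by field_simp
  set θ := T s - 2 * Real.pi with hθdef
  have hTmem := hT s hsε
  rw [Set.mem_Icc] at hTmem
  have hθle : |θ| ≤ 1 / 2 := by
    rw [abs_le]; constructor <;> [linarith [hTmem.1]; linarith [hTmem.2]]
  obtain ⟨hderiv, hcont⟩ := hsmooth s hsε
  have hce : Continuous fun t : ℝ => Complex.I * Complex.exp (Complex.I * t) :=
    continuous_const.mul (Complex.continuous_exp.comp (continuous_const.mul Complex.continuous_ofReal))
  have hzint : ∫ t in (2 * Real.pi)..(T s), zhat' s t
      = zhat s (T s) - zhat s (2 * Real.pi) :=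
    intervalIntegral.integral_eq_sub_of_hasDerivAt (fun t _ => hderiv t)
      (hcont.intervalIntegrable _ _)
  have hederiv : ∀ t : ℝ, HasDerivAt (fun t : ℝ => Complex.exp (Complex.I * t))
      (Complex.I * Complex.exp (Complex.I * t)) t := by
    intro t
    have h := ((Complex.hasDerivAt_exp (Complex.I * t)).comp (t : ℂ)
      ((hasDerivAt_id (t : ℂ)).const_mul Complex.I)).comp_ofReal
    simpa [mul_comm] using h
  have heint : ∫ t in (2 * Real.pi)..(T s), Complex.I * Complex.exp (Complex.I * t)
      = Complex.exp (Complex.I * ((T s : ℝ) : ℂ))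
        - Complex.exp (Complex.I * ((2 * Real.pi : ℝ) : ℂ)) :=
    intervalIntegral.integral_eq_sub_of_hasDerivAt (fun t _ => hederiv t)
      (hce.intervalIntegrable _ _)
  have hsub : ‖(Complex.exp (Complex.I * ((T s : ℝ) : ℂ))
        - Complex.exp (Complex.I * ((2 * Real.pi : ℝ) : ℂ)))
        - (zhat s (T s) - zhat s (2 * Real.pi))‖ ≤ K * s ^ 4 * |θ| := by
    rw [← hzint, ← heint, ← intervalIntegral.integral_sub
        (hce.intervalIntegrable _ _)
        (hcont.intervalIntegrable _ _)]
    have hb := intervalIntegral.norm_integral_le_of_norm_le_const (a := 2 * Real.pi) (b := T s)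
      (C := K * s ^ 4)
      (f := fun t => Complex.I * Complex.exp (Complex.I * t) - zhat' s t) ?_
    · 
      have : |T s - 2 * Real.pi| = |θ| := by rw [hθdef]
      rw [this] at hb
      exact hb
    · intro x hx
      have hx' : x ∈ Set.Icc (2 * Real.pi - 1 / 2) (2 * Real.pi + 1 / 2) := by
        have hsub2 : Set.uIcc (2 * Real.pi) (T s)
            ⊆ Set.Icc (2 * Real.pi - 1 / 2) (2 * Real.pi + 1 / 2) :=
          Set.uIcc_subset_Icc ⟨by linarith, by linarith⟩ ⟨hTmem.1, hTmem.2⟩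
        exact hsub2 (Set.uIoc_subset_uIcc hx)
      have hb2 := h1 s hsε x hx'
      show ‖Complex.I * Complex.exp (Complex.I * x) - zhat' s x‖ ≤ K * s ^ 4
      rw [norm_sub_rev]
      exact hb2
  -- exp simplifications
  have he2π : Complex.exp (Complex.I * ((2 * Real.pi : ℝ) : ℂ)) = 1 := by
    push_cast
    rw [mul_comm]
    exact Complex.exp_two_pi_mul_I
  have heT : Complex.exp (Complex.I * ((T s : ℝ) : ℂ)) = Complex.exp (Complex.I * (θ : ℂ)) := by
    have : ((T s : ℝ) : ℂ) = (θ : ℂ) + ((2 * Real.pi : ℝ) : ℂ) := by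
      push_cast [hθdef]; ring
    rw [this, mul_add, Complex.exp_add, he2π, mul_one]
  have hzdiff : ‖zhat s (T s) - zhat s (2 * Real.pi)‖ ≤ C₀ * s ^ 5 := by
    rw [h3 s hsε, norm_sub_rev]
    exact h2 s hsε
  have hlow := exp_I_sub_one_lower θ hθle
  have hup : ‖Complex.exp (Complex.I * (θ : ℂ)) - 1‖
      ≤ K * s ^ 4 * |θ| + C₀ * s ^ 5 := by
    have htri := @norm_sub_le ℂ _
    calc ‖Complex.exp (Complex.I * (θ : ℂ)) - 1‖
        = ‖(Complex.exp (Complex.I * ((T s : ℝ) : ℂ))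
            - Complex.exp (Complex.I * ((2 * Real.pi : ℝ) : ℂ)))
            - (zhat s (T s) - zhat s (2 * Real.pi))
            + (zhat s (T s) - zhat s (2 * Real.pi))‖ := by
          rw [heT, he2π]; ring_nf
      _ ≤ _ := by
          refine (norm_add_le _ _).trans ?_
          exact add_le_add hsub hzdiff
  have hKθ : K * s ^ 4 * |θ| ≤ 1 / 4 * |θ| := by
    have := abs_nonneg θ
    nlinarith
  have : |θ| ≤ 4 * C₀ * s ^ 5 := by linarith
  simpa [hθdef] using this
end

section
/- Let a ∈ ℝ, ε > 0 and Γ > 0. For each k ∈ ℤ let γ_k : [0, ε) → ℂ be of class C⁴ with γ_{−k}(s) = conj(γ_k(s)), γ₀(s) = 1 for all s, and | γ_k^{(ℓ)}(s) | ≤ Γ for all k ∈ ℤ, 0 ≤ ℓ ≤ 4 and s ∈ [0, ε). Suppose that there are constants C_j > 0 and functions R_j, S_j : [0, ε) → ℂ of class C⁴ with | R_j^{(ℓ)}(s) | ≤ C_j·s^{5−ℓ} and | S_j^{(ℓ)}(s) | ≤ C_j·s^{5−ℓ} for 0 ≤ ℓ ≤ 4 and all s, such that for all s ∈ [0, ε):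 (I) conj(γ_{j+1}(s)) − (4/3)·(j+3)·a·s⁴·conj(γ_{j+3}(s)) = R_j(s) for every integer j ≥ 1, and (II) conj(γ_j(s)) + (2/3)·a·s⁴·conj(γ_{j−2}(s)) − (4/3)·j·a·s⁴·conj(γ_{j+2}(s)) = S_j(s) for every integer j ≥ 2. Then a = 0. -/
open Complex ComplexConjugate Set

private lemma abs_coef (c a s : ℝ) (hc : 0 ≤ c) (hs : 0 ≤ s) (z : ℂ) :
    ‖(c : ℂ) * (a : ℂ) * (s : ℂ) ^ 4 * (starRingEnd ℂ) z‖
      = c * |a| * s ^ 4 * ‖z‖ := by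
  simp only [norm_mul, norm_pow, Complex.norm_conj, Complex.norm_real, Real.norm_eq_abs,
    _root_.abs_of_nonneg hs, _root_.abs_of_nonneg hc]

set_option maxHeartbeats 1000000 in
/-- The moment conditions on the Fourier coefficients `γ_k` of the
stationarity data force the vanishing of the umbilical coefficient: `a = 0`. -/
theorem fourier_coefficients_force_umbilicity
    (a ε Γ : ℝ) (hε : 0 < ε) (hΓ : 0 < Γ)
    (γ : ℤ → ℝ → ℂ)
    (hC4 : ∀ k : ℤ, ContDiffOn ℝ 4 (γ k) (Set.Ico 0 ε))
    (hconj : ∀ k : ℤ, ∀ s ∈ Set.Ico (0 : ℝ) ε, γ (-k) s = conj (γ k s))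
    (hγ0 : ∀ s ∈ Set.Ico (0 : ℝ) ε, γ 0 s = 1)
    (hbd : ∀ k : ℤ, ∀ ℓ : ℕ, ℓ ≤ 4 → ∀ s ∈ Set.Ico (0 : ℝ) ε,
      ‖iteratedDerivWithin ℓ (γ k) (Set.Ico 0 ε) s‖ ≤ Γ)
    (hI : ∀ j : ℕ, 1 ≤ j → ∃ C : ℝ, 0 < C ∧ ∃ R : ℝ → ℂ,
      ContDiffOn ℝ 4 R (Set.Ico 0 ε) ∧
      (∀ ℓ : ℕ, ℓ ≤ 4 → ∀ s ∈ Set.Ico (0 : ℝ) ε,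
        ‖iteratedDerivWithin ℓ R (Set.Ico 0 ε) s‖ ≤ C * s ^ (5 - ℓ)) ∧
      ∀ s ∈ Set.Ico (0 : ℝ) ε,
        conj (γ ((j : ℤ) + 1) s)
          - (4 / 3) * ((j : ℂ) + 3) * (a : ℂ) * (s : ℂ) ^ 4 * conj (γ ((j : ℤ) + 3) s) = R s)
    (hII : ∀ j : ℕ, 2 ≤ j → ∃ C : ℝ, 0 < C ∧ ∃ S : ℝ → ℂ,
      ContDiffOn ℝ 4 S (Set.Ico 0 ε) ∧
      (∀ ℓ : ℕ, ℓ ≤ 4 → ∀ s ∈ Set.Ico (0 : ℝ) ε,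
        ‖iteratedDerivWithin ℓ S (Set.Ico 0 ε) s‖ ≤ C * s ^ (5 - ℓ)) ∧
      ∀ s ∈ Set.Ico (0 : ℝ) ε,
        conj (γ (j : ℤ) s)
          + (2 / 3) * (a : ℂ) * (s : ℂ) ^ 4 * conj (γ ((j : ℤ) - 2) s)
          - (4 / 3) * (j : ℂ) * (a : ℂ) * (s : ℂ) ^ 4 * conj (γ ((j : ℤ) + 2) s) = S s) :
    a = 0 := by
  by_contra ha
  have haa : 0 < |a| := abs_pos.mpr ha
  obtain ⟨C1, hC1, R1, -, hR1bd, hR1eq⟩ := hI 1 le_rfl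
  obtain ⟨C3, hC3, R3, -, hR3bd, hR3eq⟩ := hI 3 (by norm_num)
  obtain ⟨C2, hC2, S2, -, hS2bd, hS2eq⟩ := hII 2 le_rfl
  set K : ℝ := C2 + C1 + (16/3) * |a| * C3 + (128/3) * |a| ^ 2 * Γ
      + (8/3) * |a| * C3 + (64/3) * |a| ^ 2 * Γ with hKdef
  have hKpos : 0 < K := by positivity
  set s : ℝ := min (ε/2) (min (1/2) (|a|/(3*K))) with hsdef
  have hspos : 0 < s := lt_min (by linarith) (lt_min (by norm_num) (by positivity))
  have hsε : s < ε := lt_of_le_of_lt (min_le_left _ _) (by linarith)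
  have hs1 : s ≤ 1 := le_trans (le_trans (min_le_right _ _) (min_le_left _ _)) (by norm_num)
  have hsK : s ≤ |a| / (3*K) := le_trans (min_le_right _ _) (min_le_right _ _)
  have hsmem : s ∈ Set.Ico (0:ℝ) ε := ⟨hspos.le, hsε⟩
  -- zeroth order bounds
  have hR1z : ‖R1 s‖ ≤ C1 * s ^ 5 := by
    simpa using hR1bd 0 (by norm_num) s hsmem
  have hR3z : ‖R3 s‖ ≤ C3 * s ^ 5 := by
    simpa using hR3bd 0 (by norm_num) s hsmem
  have hS2z : ‖S2 s‖ ≤ C2 * s ^ 5 := by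
    simpa using hS2bd 0 (by norm_num) s hsmem
  have hγ6 : ‖γ 6 s‖ ≤ Γ := by simpa using hbd 6 0 (by norm_num) s hsmem
  -- bound on γ 4
  have e3 : conj (γ 4 s) = R3 s + ((8:ℝ) : ℂ) * (a : ℂ) * (s : ℂ) ^ 4 * conj (γ 6 s) := by
    have h := hR3eq s hsmem
    push_cast at h ⊢
    norm_num at h ⊢
    linear_combination h
  have hγ4 : ‖γ 4 s‖ ≤ C3 * s ^ 5 + 8 * |a| * s ^ 4 * Γ := by
    have h1 : ‖conj (γ 4 s)‖ = ‖γ 4 s‖ := Complex.norm_conj _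
    have h2 : ‖conj (γ 4 s)‖
        ≤ ‖R3 s‖ + ‖((8:ℝ) : ℂ) * (a : ℂ) * (s : ℂ) ^ 4 * conj (γ 6 s)‖ := by
      rw [e3]; exact norm_add_le _ _
    have h3 := abs_coef 8 a s (by norm_num) hspos.le (γ 6 s)
    rw [h1, h3] at h2
    have hnn : (0:ℝ) ≤ 8 * |a| * s ^ 4 := by positivity
    nlinarith [norm_nonneg (γ 6 s)]
  -- bound on γ 2
  have e1 : conj (γ 2 s) = R1 s + ((16/3 : ℝ) : ℂ) * (a : ℂ) * (s : ℂ) ^ 4 * conj (γ 4 s) := by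
    have h := hR1eq s hsmem
    push_cast at h ⊢
    norm_num at h ⊢
    linear_combination h
  have hγ2 : ‖γ 2 s‖
      ≤ C1 * s ^ 5 + (16/3) * |a| * s ^ 4 * (C3 * s ^ 5 + 8 * |a| * s ^ 4 * Γ) := by
    have h1 : ‖conj (γ 2 s)‖ = ‖γ 2 s‖ := Complex.norm_conj _
    have h2 : ‖conj (γ 2 s)‖
        ≤ ‖R1 s‖
          + ‖((16/3 : ℝ) : ℂ) * (a : ℂ) * (s : ℂ) ^ 4 * conj (γ 4 s)‖ := by
      rw [e1]; exact norm_add_le _ _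
    have h3 := abs_coef (16/3) a s (by norm_num) hspos.le (γ 4 s)
    rw [h1, h3] at h2
    have hnn : (0:ℝ) ≤ (16/3) * |a| * s ^ 4 := by positivity
    nlinarith
  -- the key relation from (II) with j = 2
  have e2 : ((2/3 : ℝ) : ℂ) * (a : ℂ) * (s : ℂ) ^ 4 * (starRingEnd ℂ) 1
      = S2 s - conj (γ 2 s) + ((8/3 : ℝ) : ℂ) * (a : ℂ) * (s : ℂ) ^ 4 * conj (γ 4 s) := by
    have h := hS2eq s hsmem
    have h0 : γ (((2:ℕ) : ℤ) - 2) s = 1 := by norm_num [hγ0 s hsmem]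
    rw [h0] at h
    push_cast at h ⊢
    norm_num at h ⊢
    linear_combination h
  have key : (2/3) * |a| * s ^ 4
      ≤ ‖S2 s‖ + ‖γ 2 s‖
        + (8/3) * |a| * s ^ 4 * ‖γ 4 s‖ := by
    have hL := abs_coef (2/3) a s (by norm_num) hspos.le 1
    have h2 : ‖((2/3 : ℝ) : ℂ) * (a : ℂ) * (s : ℂ) ^ 4 * (starRingEnd ℂ) 1‖
        ≤ ‖S2 s - conj (γ 2 s)‖
          + ‖((8/3 : ℝ) : ℂ) * (a : ℂ) * (s : ℂ) ^ 4 * conj (γ 4 s)‖ := by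
      rw [e2]; exact norm_add_le _ _
    have h3 : ‖S2 s - conj (γ 2 s)‖
        ≤ ‖S2 s‖ + ‖γ 2 s‖ := by
      calc ‖S2 s - conj (γ 2 s)‖
          ≤ ‖S2 s‖ + ‖conj (γ 2 s)‖ := by
            simpa [sub_eq_add_neg] using norm_add_le (S2 s) (-(conj (γ 2 s)))
        _ = ‖S2 s‖ + ‖γ 2 s‖ := by rw [Complex.norm_conj]
    have h4 := abs_coef (8/3) a s (by norm_num) hspos.le (γ 4 s)
    rw [hL, h4] at h2
    simp only [norm_one, mul_one] at h2
    linarith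
  -- put the estimates together: (2/3)|a| s^4 ≤ K s^5
  have hs8 : s ^ 8 ≤ s ^ 5 := pow_le_pow_of_le_one hspos.le hs1 (by norm_num)
  have hs9 : s ^ 9 ≤ s ^ 5 := pow_le_pow_of_le_one hspos.le hs1 (by norm_num)
  have hmain : (2/3) * |a| * s ^ 4 ≤ K * s ^ 5 := by
    have hb4 : (8/3) * |a| * s ^ 4 * ‖γ 4 s‖
        ≤ (8/3) * |a| * s ^ 4 * (C3 * s ^ 5 + 8 * |a| * s ^ 4 * Γ) :=
      mul_le_mul_of_nonneg_left hγ4 (by positivity)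
    have expand : C2 * s ^ 5
        + (C1 * s ^ 5 + (16/3) * |a| * s ^ 4 * (C3 * s ^ 5 + 8 * |a| * s ^ 4 * Γ))
        + (8/3) * |a| * s ^ 4 * (C3 * s ^ 5 + 8 * |a| * s ^ 4 * Γ) ≤ K * s ^ 5 := by
      rw [hKdef]
      nlinarith [mul_le_mul_of_nonneg_left hs8 (by positivity : (0:ℝ) ≤ (128/3) * |a| ^ 2 * Γ),
        mul_le_mul_of_nonneg_left hs8 (by positivity : (0:ℝ) ≤ (64/3) * |a| ^ 2 * Γ),
        mul_le_mul_of_nonneg_left hs9 (by positivity : (0:ℝ) ≤ (16/3) * |a| * C3),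
        mul_le_mul_of_nonneg_left hs9 (by positivity : (0:ℝ) ≤ (8/3) * |a| * C3)]
    linarith
  -- conclude
  have hdiv : (2/3) * |a| ≤ K * s := by
    have h4pos : (0:ℝ) < s ^ 4 := by positivity
    have h5 : K * s ^ 5 = K * s * s ^ 4 := by ring
    have : (2/3) * |a| * s ^ 4 ≤ K * s * s ^ 4 := by rw [← h5]; exact hmain
    exact le_of_mul_le_mul_right this h4pos
  have hKs : K * s ≤ |a| / 3 := by
    calc K * s ≤ K * (|a| / (3*K)) := mul_le_mul_of_nonneg_left hsK hKpos.le
      _ = |a| / 3 := by field_simp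
  linarith
end
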